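/- arXiv:1905.11811 — 8 statements merged into one kernel-verified Lean document; each statement's English description precedes it below -/
import Mathlib

section
/- (Lemma 1: no oscillatory limit cycle.) Assume k_f > 0. If q : ℝ → ℝ is twice differentiable, satisfies I·q''(t) = −k_f·q'(t) + τ(q(t)) for all t ∈ [0, T] with T > 0, and the planar closure condition q(T) = q(0) and q'(T) = q'(0) holds, then q'(t) = 0 for all t ∈ [0, T]; in particular q is constant on [0, T], so the system has no nonconstant periodic solution that is contractible on the cylinder. -/
/-- **Lemma 1: no oscillatory limit cycle.**
Assume `k_f > 0`. If `q` is twice differentiable and satisfies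
`I·q''(t) = −k_f·q'(t) + τ(q(t))` for all `t ∈ [0, T]` with `T > 0`, and the planar
closure condition `q(T) = q(0)`, `q'(T) = q'(0)` holds, then `q'(t) = 0` for all
`t ∈ [0, T]`; in particular `q` is constant on `[0, T]`.  Hence the system has no
nonconstant periodic solution that is contractible on the cylinder. -/
theorem no_oscillatory_limit_cycle
    (I kf : ℝ) (hI : 0 < I) (hkf : 0 < kf)
    (τ : ℝ → ℝ) (hτ : Continuous τ)
    (T : ℝ) (hT : 0 < T)
    (q q' q'' : ℝ → ℝ)
    (hq : ∀ t, HasDerivAt q (q' t) t)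
    (hq' : ∀ t, HasDerivAt q' (q'' t) t)
    (hode : ∀ t ∈ Set.Icc (0:ℝ) T, I * q'' t = -kf * q' t + τ (q t))
    (hclose_q : q T = q 0) (hclose_q' : q' T = q' 0) :
    ∀ t ∈ Set.Icc (0:ℝ) T, q' t = 0 ∧ q t = q 0 := by
  -- antiderivative of τ
  set F : ℝ → ℝ := fun y => ∫ s in (0:ℝ)..y, τ s with hF
  have hFd : ∀ x : ℝ, HasDerivAt F (τ x) x := fun x =>
    intervalIntegral.integral_hasDerivAt_right (hτ.intervalIntegrable 0 x)
      (hτ.stronglyMeasurableAtFilter _ _) hτ.continuousAt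
  -- energy function
  set G : ℝ → ℝ := fun t => I / 2 * (q' t) ^ 2 - F (q t) with hG
  have hGderiv : ∀ t, HasDerivAt G (I * q' t * q'' t - τ (q t) * q' t) t := by
    intro t
    have h1 : HasDerivAt (fun t => I / 2 * (q' t) ^ 2)
        (I / 2 * ((2 : ℕ) * q' t ^ (2 - 1) * q'' t)) t := ((hq' t).pow 2).const_mul (I / 2)
    have h2 : HasDerivAt (fun t => F (q t)) (τ (q t) * q' t) t :=
      (hFd (q t)).comp t (hq t)
    have h3 := h1.sub h2
    refine h3.congr_deriv ?_
    push_cast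
    ring
  have hGd : ∀ t ∈ Set.Icc (0:ℝ) T, HasDerivAt G (-kf * (q' t) ^ 2) t := by
    intro t ht
    have h3 := hGderiv t
    convert h3 using 1
    linear_combination -(q' t) * hode t ht
  -- G is antitone on [0,T]
  have hGdiff : Differentiable ℝ G := fun t => (hGderiv t).differentiableAt
  have hanti : AntitoneOn G (Set.Icc 0 T) := by
    apply antitoneOn_of_deriv_nonpos (convex_Icc 0 T) hGdiff.continuous.continuousOn
      hGdiff.differentiableOn
    intro t ht
    rw [interior_Icc] at ht
    rw [(hGd t ⟨ht.1.le, ht.2.le⟩).deriv]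
    nlinarith [sq_nonneg (q' t)]
  -- G(T) = G(0)
  have hGT : G T = G 0 := by simp [hG, hclose_q, hclose_q']
  -- G constant on [0,T]
  have hGconst : ∀ t ∈ Set.Icc (0:ℝ) T, G t = G 0 := by
    intro t ht
    have h1 : G t ≤ G 0 := hanti (Set.left_mem_Icc.mpr hT.le) ht ht.1
    have h2 : G T ≤ G t := hanti ht (Set.right_mem_Icc.mpr hT.le) ht.2
    linarith [hGT ▸ h2]
  -- q' = 0 on interior
  have hq'int : ∀ t ∈ Set.Ioo (0:ℝ) T, q' t = 0 := by
    intro t ht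
    have hmem : t ∈ Set.Icc (0:ℝ) T := ⟨ht.1.le, ht.2.le⟩
    have hd := hGd t hmem
    have hcongr : G =ᶠ[nhds t] fun _ => G 0 := by
      filter_upwards [Icc_mem_nhds ht.1 ht.2] with s hs
      exact hGconst s hs
    have hzero : HasDerivAt G 0 t :=
      (hasDerivAt_const t (G 0)).congr_of_eventuallyEq hcongr
    have hkey : -kf * (q' t) ^ 2 = 0 := hd.unique hzero
    rcases mul_eq_zero.mp hkey with h | h
    · linarith
    · exact pow_eq_zero_iff (n := 2) (by norm_num) |>.mp h
  -- q' = 0 on closed interval by continuity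
  have hq'zero : ∀ t ∈ Set.Icc (0:ℝ) T, q' t = 0 := by
    have hcont : Continuous q' := continuous_iff_continuousAt.mpr fun t => (hq' t).continuousAt
    have hclosed : IsClosed {t : ℝ | q' t = 0} := isClosed_eq hcont continuous_const
    have hsub : Set.Ioo (0:ℝ) T ⊆ {t | q' t = 0} := fun t ht => hq'int t ht
    have : Set.Icc (0:ℝ) T ⊆ {t | q' t = 0} := by
      rw [← closure_Ioo hT.ne]
      exact hclosed.closure_subset_iff.mpr hsub
    exact fun t ht => this ht
  -- q constant
  intro t ht
  refine ⟨hq'zero t ht, ?_⟩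
  have hqdiff : Differentiable ℝ q := fun s => (hq s).differentiableAt
  have hderivq : ∀ s ∈ interior (Set.Icc (0:ℝ) T), deriv q s = 0 := by
    intro s hs
    rw [interior_Icc] at hs
    rw [(hq s).deriv]
    exact hq'zero s ⟨hs.1.le, hs.2.le⟩
  have hmono : MonotoneOn q (Set.Icc 0 T) :=
    monotoneOn_of_deriv_nonneg (convex_Icc 0 T) hqdiff.continuous.continuousOn
      hqdiff.differentiableOn (fun s hs => (hderivq s hs).ge)
  have hantiq : AntitoneOn q (Set.Icc 0 T) :=
    antitoneOn_of_deriv_nonpos (convex_Icc 0 T) hqdiff.continuous.continuousOn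
      hqdiff.differentiableOn (fun s hs => (hderivq s hs).le)
  have h0 : (0:ℝ) ∈ Set.Icc (0:ℝ) T := Set.left_mem_Icc.mpr hT.le
  exact le_antisymm (hantiq h0 ht ht.1) (hmono h0 ht ht.1)
end

section
/- (Lemma 2.) Assume k_f ≠ 0 and that τ : ℝ → ℝ is continuous and 2π-periodic. If z : [0, 2π] → ℝ is continuously differentiable, satisfies I·z(s)·z'(s) = −k_f·z(s) + τ(s) for all s ∈ [0, 2π], and z(0) = z(2π), then ∫₀^{2π} z(s) ds = −U(2π)/k_f, where U(q) = −∫₀^q τ(s) ds. -/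
/-- The potential `U(q) = -∫₀^q τ(s) ds`. -/
noncomputable def potentialU (τ : ℝ → ℝ) (q : ℝ) : ℝ := -∫ s in (0:ℝ)..q, τ s

/-- **Lemma 2.** Assume `k_f ≠ 0` and `τ` continuous and 2π-periodic.
If `z : [0, 2π] → ℝ` is continuously differentiable, satisfies
`I·z(s)·z'(s) = −k_f·z(s) + τ(s)` for all `s ∈ [0, 2π]`, and `z(0) = z(2π)`,
then `∫₀^{2π} z(s) ds = −U(2π)/k_f`. -/
theorem rotational_cycle_integral
    (I kf : ℝ) (hI : 0 < I) (hkf : kf ≠ 0)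
    (τ : ℝ → ℝ) (hτ : Continuous τ) (hper : Function.Periodic τ (2 * Real.pi))
    (z z' : ℝ → ℝ)
    (hz : ∀ s ∈ Set.Icc (0:ℝ) (2 * Real.pi), HasDerivAt z (z' s) s)
    (hz' : ContinuousOn z' (Set.Icc (0:ℝ) (2 * Real.pi)))
    (hode : ∀ s ∈ Set.Icc (0:ℝ) (2 * Real.pi), I * z s * z' s = -kf * z s + τ s)
    (hclose : z 0 = z (2 * Real.pi)) :
    ∫ s in (0:ℝ)..(2 * Real.pi), z s = -potentialU τ (2 * Real.pi) / kf := by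
  have hpi : (0:ℝ) ≤ 2 * Real.pi := by positivity
  have huIcc : Set.uIcc (0:ℝ) (2 * Real.pi) = Set.Icc (0:ℝ) (2 * Real.pi) :=
    Set.uIcc_of_le hpi
  have hzc : ContinuousOn z (Set.Icc (0:ℝ) (2 * Real.pi)) := fun s hs =>
    ((hz s hs).continuousAt).continuousWithinAt
  -- continuity of I z z'
  have hcont : ContinuousOn (fun s => I * z s * z' s) (Set.Icc (0:ℝ) (2 * Real.pi)) :=
    ((continuousOn_const.mul hzc).mul hz')
  -- FTC for F = I/2 z^2
  have hderiv : ∀ s ∈ Set.Icc (0:ℝ) (2 * Real.pi),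
      HasDerivAt (fun s => I / 2 * (z s) ^ 2) (I * z s * z' s) s := by
    intro s hs
    have : HasDerivAt (fun y => I / 2 * z y ^ 2) (I / 2 * (((2:ℕ):ℝ) * z s ^ 1 * z' s)) s :=
      ((hz s hs).pow 2).const_mul (I / 2)
    convert this using 1
    ring
  have hint : IntervalIntegrable (fun s => I * z s * z' s) MeasureTheory.volume 0 (2 * Real.pi) :=
    (hcont.mono (by rw [huIcc])).intervalIntegrable
  have hFTC : ∫ s in (0:ℝ)..(2 * Real.pi), I * z s * z' s
      = I / 2 * (z (2 * Real.pi)) ^ 2 - I / 2 * (z 0) ^ 2 :=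
    intervalIntegral.integral_eq_sub_of_hasDerivAt (fun s hs => hderiv s (huIcc ▸ hs)) hint
  have hzero : ∫ s in (0:ℝ)..(2 * Real.pi), I * z s * z' s = 0 := by
    rw [hFTC, hclose]; ring
  -- rewrite integrand via ODE
  have hcongr : ∫ s in (0:ℝ)..(2 * Real.pi), I * z s * z' s
      = ∫ s in (0:ℝ)..(2 * Real.pi), (-kf * z s + τ s) := by
    apply intervalIntegral.integral_congr
    intro s hs
    exact hode s (huIcc ▸ hs)
  have hzint : IntervalIntegrable z MeasureTheory.volume 0 (2 * Real.pi) :=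
    (hzc.mono (by rw [huIcc])).intervalIntegrable
  have hτint : IntervalIntegrable τ MeasureTheory.volume 0 (2 * Real.pi) :=
    hτ.intervalIntegrable _ _
  have hsplit : ∫ s in (0:ℝ)..(2 * Real.pi), (-kf * z s + τ s)
      = -kf * (∫ s in (0:ℝ)..(2 * Real.pi), z s) + ∫ s in (0:ℝ)..(2 * Real.pi), τ s := by
    rw [intervalIntegral.integral_add (hzint.const_mul _) hτint,
      intervalIntegral.integral_const_mul]
  have key : -kf * (∫ s in (0:ℝ)..(2 * Real.pi), z s)
      + (∫ s in (0:ℝ)..(2 * Real.pi), τ s) = 0 := by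
    rw [← hsplit, ← hcongr, hzero]
  unfold potentialU
  field_simp
  linarith [key]
end

section
/- (Uniqueness of the non-contractible limit cycle, graph form.) Assume k_f > 0 and that τ : ℝ → ℝ is Lipschitz continuous and 2π-periodic. If z₁, z₂ : ℝ → ℝ are continuously differentiable, 2π-periodic, nowhere vanishing, and each satisfies I·zᵢ(s)·zᵢ'(s) = −k_f·zᵢ(s) + τ(s) for all s ∈ ℝ, then z₁ = z₂. -/
/-- **uniqueness of the non-contractible limit cycle, graph form.**
Assume `k_f > 0` and `τ` Lipschitz continuous and 2π-periodic. If `z₁, z₂ : ℝ → ℝ`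
are continuously differentiable, 2π-periodic, nowhere vanishing, and each satisfies
`I·zᵢ(s)·zᵢ'(s) = −k_f·zᵢ(s) + τ(s)` for all `s ∈ ℝ`, then `z₁ = z₂`. -/
theorem noncontractible_limit_cycle_unique
    (I kf : ℝ) (hI : 0 < I) (hkf : 0 < kf)
    (τ : ℝ → ℝ) (hlip : ∃ K, LipschitzWith K τ)
    (hper : Function.Periodic τ (2 * Real.pi))
    (z₁ z₁' z₂ z₂' : ℝ → ℝ)
    (hz₁ : ∀ s, HasDerivAt z₁ (z₁' s) s) (hz₁' : Continuous z₁')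
    (hz₂ : ∀ s, HasDerivAt z₂ (z₂' s) s) (hz₂' : Continuous z₂')
    (hp₁ : Function.Periodic z₁ (2 * Real.pi))
    (hp₂ : Function.Periodic z₂ (2 * Real.pi))
    (hn₁ : ∀ s, z₁ s ≠ 0) (hn₂ : ∀ s, z₂ s ≠ 0)
    (hode₁ : ∀ s, I * z₁ s * z₁' s = -kf * z₁ s + τ s)
    (hode₂ : ∀ s, I * z₂ s * z₂' s = -kf * z₂ s + τ s) :
    z₁ = z₂ := by
  set u : ℝ → ℝ := fun s => z₁ s * z₁ s - z₂ s * z₂ s with hu_def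
  set D : ℝ → ℝ := fun s => (-2 * kf / I) * (z₁ s - z₂ s) with hD_def
  have hIne : I ≠ 0 := hI.ne'
  have hu : ∀ s, HasDerivAt u (D s) s := by
    intro s
    have h := ((hz₁ s).mul (hz₁ s)).sub ((hz₂ s).mul (hz₂ s))
    refine h.congr_deriv (Eq.symm ?_)
    have h1 := hode₁ s
    have h2 := hode₂ s
    show -2 * kf / I * (z₁ s - z₂ s) = _
    rw [div_mul_eq_mul_div, div_eq_iff hIne]
    linear_combination (-2 : ℝ) * h1 + 2 * h2
  have hpu : Function.Periodic u (2 * Real.pi) := by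
    intro s; simp [hu_def, hp₁ s, hp₂ s]
  have hcu : Continuous u := by
    have c1 : Continuous z₁ := continuous_iff_continuousAt.mpr fun s => (hz₁ s).continuousAt
    have c2 : Continuous z₂ := continuous_iff_continuousAt.mpr fun s => (hz₂ s).continuousAt
    fun_prop
  have hpi : (0:ℝ) < 2 * Real.pi := by positivity
  -- a global extremum point gives u = 0 there
  have key : ∀ s₀ : ℝ, (IsLocalMax u s₀ ∨ IsLocalMin u s₀) → u s₀ = 0 := by
    intro s₀ h
    have hD0 : D s₀ = 0 := by
      rcases h with h | h
      · exact h.hasDerivAt_eq_zero (hu s₀)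
      · exact h.hasDerivAt_eq_zero (hu s₀)
    have hz : z₁ s₀ = z₂ s₀ := by
      have hne : (-2 * kf / I) ≠ 0 := by positivity
      have := mul_eq_zero.mp hD0
      rcases this with h' | h'
      · exact absurd h' hne
      · linarith [sub_eq_zero.mp h']
    simp [hu_def, hz]
  -- max
  have hmax : ∀ s, u s ≤ 0 := by
    obtain ⟨s₀, hs₀mem, hs₀⟩ := (isCompact_Icc (a := (0:ℝ)) (b := 2 * Real.pi)).exists_isMaxOn
      (Set.nonempty_Icc.mpr hpi.le) hcu.continuousOn
    have hglob : ∀ s, u s ≤ u s₀ := by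
      intro s
      obtain ⟨y, hy, hyx⟩ := hpu.exists_mem_Ico₀ hpi s
      rw [hyx]
      exact hs₀ (Set.mem_Icc_of_Ico hy)
    have : u s₀ = 0 := key s₀ (Or.inl ((isMaxOn_univ_iff.mpr hglob).isLocalMax Filter.univ_mem))
    intro s; rw [← this]; exact hglob s
  have hmin : ∀ s, 0 ≤ u s := by
    obtain ⟨s₀, hs₀mem, hs₀⟩ := (isCompact_Icc (a := (0:ℝ)) (b := 2 * Real.pi)).exists_isMinOn
      (Set.nonempty_Icc.mpr hpi.le) hcu.continuousOn
    have hglob : ∀ s, u s₀ ≤ u s := by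
      intro s
      obtain ⟨y, hy, hyx⟩ := hpu.exists_mem_Ico₀ hpi s
      rw [hyx]
      exact hs₀ (Set.mem_Icc_of_Ico hy)
    have : u s₀ = 0 := key s₀ (Or.inr ((isMinOn_univ_iff.mpr hglob).isLocalMin Filter.univ_mem))
    intro s; rw [← this]; exact hglob s
  have hu0 : u = fun _ => (0:ℝ) := funext fun s => le_antisymm (hmax s) (hmin s)
  -- derivative of u is zero, hence z₁ = z₂
  funext s
  have hD0 : D s = 0 := by
    have h := hu s
    rw [hu0] at h
    exact h.unique (hasDerivAt_const s 0)
  have hne : (-2 * kf / I) ≠ 0 := by positivity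
  rcases mul_eq_zero.mp hD0 with h' | h'
  · exact absurd h' hne
  · linarith [sub_eq_zero.mp h']
end

section
/- (Theorem 1, sign part, graph form.) Assume k_f > 0 and that τ : ℝ → ℝ is continuous and 2π-periodic, with U(q) = −∫₀^q τ(s) ds. If z : [0, 2π] → ℝ is continuously differentiable, satisfies I·z(s)·z'(s) = −k_f·z(s) + τ(s) for all s, z(0) = z(2π), and z(s) ≠ 0 for all s ∈ [0, 2π], then U(2π) ≠ 0 and z(s)·U(2π) < 0 for all s ∈ [0, 2π]; that is, the limit cycle is sign definite with sign opposite to the sign of U(2π). -/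
/-- **Theorem 1, sign part, graph form.**
Assume `k_f > 0` and `τ` continuous and 2π-periodic, with `U(q) = −∫₀^q τ(s) ds`.
If `z : [0, 2π] → ℝ` is continuously differentiable, satisfies
`I·z(s)·z'(s) = −k_f·z(s) + τ(s)` for all `s`, `z(0) = z(2π)`, and `z(s) ≠ 0` on
`[0, 2π]`, then `U(2π) ≠ 0` and `z(s)·U(2π) < 0` on `[0, 2π]`: the limit cycle is
sign definite with sign opposite to that of `U(2π)`. -/
theorem limit_cycle_sign_definite
    (I kf : ℝ) (hI : 0 < I) (hkf : 0 < kf)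
    (τ : ℝ → ℝ) (hτ : Continuous τ) (hper : Function.Periodic τ (2 * Real.pi))
    (z z' : ℝ → ℝ)
    (hz : ∀ s ∈ Set.Icc (0:ℝ) (2 * Real.pi), HasDerivAt z (z' s) s)
    (hz' : ContinuousOn z' (Set.Icc (0:ℝ) (2 * Real.pi)))
    (hode : ∀ s ∈ Set.Icc (0:ℝ) (2 * Real.pi), I * z s * z' s = -kf * z s + τ s)
    (hclose : z 0 = z (2 * Real.pi))
    (hnz : ∀ s ∈ Set.Icc (0:ℝ) (2 * Real.pi), z s ≠ 0) :
    potentialU τ (2 * Real.pi) ≠ 0 ∧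
      ∀ s ∈ Set.Icc (0:ℝ) (2 * Real.pi), z s * potentialU τ (2 * Real.pi) < 0 := by
  have hπ : (0:ℝ) < 2 * Real.pi := by positivity
  have huIcc : Set.uIcc (0:ℝ) (2 * Real.pi) = Set.Icc (0:ℝ) (2 * Real.pi) :=
    Set.uIcc_of_le hπ.le
  have hzc : ContinuousOn z (Set.Icc (0:ℝ) (2 * Real.pi)) :=
    fun s hs => (hz s hs).continuousAt.continuousWithinAt
  -- integrability
  have hintz : IntervalIntegrable z MeasureTheory.volume 0 (2 * Real.pi) := by
    apply ContinuousOn.intervalIntegrable; rw [huIcc]; exact hzc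
  have hintzz' : IntervalIntegrable (fun s => z s * z' s) MeasureTheory.volume 0 (2 * Real.pi) := by
    apply ContinuousOn.intervalIntegrable; rw [huIcc]; exact hzc.mul hz'
  -- FTC: ∫ z z' = 0
  have hftc : (∫ s in (0:ℝ)..(2 * Real.pi), z s * z' s) = 0 := by
    have hderiv : ∀ s ∈ Set.uIcc (0:ℝ) (2 * Real.pi),
        HasDerivAt (fun t => z t ^ 2 / 2) (z s * z' s) s := by
      intro s hs
      rw [huIcc] at hs
      have h := (((hz s hs).mul (hz s hs)).div_const 2)
      have : (z' s * z s + z s * z' s) / 2 = z s * z' s := by ring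
      simpa [pow_two, this] using h
    have := intervalIntegral.integral_eq_sub_of_hasDerivAt hderiv hintzz'
    rw [this, hclose]; ring
  -- ∫ τ = kf * ∫ z
  have hτint : (∫ s in (0:ℝ)..(2 * Real.pi), τ s)
      = kf * ∫ s in (0:ℝ)..(2 * Real.pi), z s := by
    have hcongr : (∫ s in (0:ℝ)..(2 * Real.pi), τ s)
        = ∫ s in (0:ℝ)..(2 * Real.pi), (I * (z s * z' s) + kf * z s) := by
      apply intervalIntegral.integral_congr
      intro s hs
      rw [huIcc] at hs
      have := hode s hs
      simp only []
      linarith [this]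
    rw [hcongr, intervalIntegral.integral_add ((hintzz'.const_mul I))
      (hintz.const_mul kf), intervalIntegral.integral_const_mul,
      intervalIntegral.integral_const_mul, hftc]
    ring
  have hU : potentialU τ (2 * Real.pi) = -(kf * ∫ s in (0:ℝ)..(2 * Real.pi), z s) := by
    rw [potentialU, hτint]
  -- sign dichotomy
  have hz0 : z 0 ≠ 0 := hnz 0 ⟨le_refl _, hπ.le⟩
  have hsign : (∀ s ∈ Set.Icc (0:ℝ) (2 * Real.pi), 0 < z s) ∨
      (∀ s ∈ Set.Icc (0:ℝ) (2 * Real.pi), z s < 0) := by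
    rcases hz0.lt_or_gt with h0 | h0
    · right
      intro s hs
      by_contra h
      push_neg at h
      have hslt : 0 < z s := lt_of_le_of_ne h (Ne.symm (hnz s hs))
      have hsub : Set.Icc (0:ℝ) s ⊆ Set.Icc (0:ℝ) (2 * Real.pi) :=
        Set.Icc_subset_Icc le_rfl hs.2
      have := intermediate_value_Icc hs.1 (hzc.mono hsub)
      have h0mem : (0:ℝ) ∈ Set.Icc (z 0) (z s) := ⟨h0.le, hslt.le⟩
      obtain ⟨c, hc, hc0⟩ := this h0mem
      exact hnz c (hsub hc) hc0
    · left
      intro s hs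
      by_contra h
      push_neg at h
      have hslt : z s < 0 := lt_of_le_of_ne h (hnz s hs)
      have hsub : Set.Icc (0:ℝ) s ⊆ Set.Icc (0:ℝ) (2 * Real.pi) :=
        Set.Icc_subset_Icc le_rfl hs.2
      have := intermediate_value_Icc' hs.1 (hzc.mono hsub)
      have h0mem : (0:ℝ) ∈ Set.Icc (z s) (z 0) := ⟨hslt.le, h0.le⟩
      obtain ⟨c, hc, hc0⟩ := this h0mem
      exact hnz c (hsub hc) hc0
  rcases hsign with hpos | hneg
  · have hintpos : 0 < ∫ s in (0:ℝ)..(2 * Real.pi), z s := by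
      apply intervalIntegral.intervalIntegral_pos_of_pos_on hintz _ hπ
      intro s hs
      exact hpos s ⟨hs.1.le, hs.2.le⟩
    have hUneg : potentialU τ (2 * Real.pi) < 0 := by
      rw [hU]; nlinarith
    exact ⟨hUneg.ne, fun s hs => mul_neg_of_pos_of_neg (hpos s hs) hUneg⟩
  · have hintneg : (∫ s in (0:ℝ)..(2 * Real.pi), z s) < 0 := by
      have : 0 < ∫ s in (0:ℝ)..(2 * Real.pi), (-z s) := by
        apply intervalIntegral.intervalIntegral_pos_of_pos_on hintz.neg _ hπ
        intro s hs
        simpa using hneg s ⟨hs.1.le, hs.2.le⟩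
      rw [intervalIntegral.integral_neg] at this
      linarith
    have hUpos : 0 < potentialU τ (2 * Real.pi) := by
      rw [hU]; nlinarith
    exact ⟨hUpos.ne', fun s hs => mul_neg_of_neg_of_pos (hneg s hs) hUpos⟩
end

section
/- (Energy balance on a rotational periodic solution.) Assume k_f > 0 and that τ : ℝ → ℝ is continuous and 2π-periodic, with U(q) = −∫₀^q τ(s) ds. Let m be a nonzero integer and suppose q : ℝ → ℝ is twice differentiable, satisfies I·q''(t) = −k_f·q'(t) + τ(q(t)) for all t, and q(t + T) = q(t) + 2π·m for all t, for some T > 0. Then k_f·∫₀^T (q'(t))² dt = −m·U(2π); in particular m·U(2π) < 0, so a rotational periodic solution advancing by +2π per period can exist only if U(2π) < 0, and one retreating by −2π per period only if U(2π) > 0. -/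
/-- **energy balance on a rotational periodic solution.**
Assume `k_f > 0` and `τ` continuous and 2π-periodic, with `U(q) = −∫₀^q τ(s) ds`.
Let `m` be a nonzero integer and suppose `q : ℝ → ℝ` is twice differentiable,
satisfies `I·q''(t) = −k_f·q'(t) + τ(q(t))` for all `t`, and
`q(t + T) = q(t) + 2π·m` for all `t`, for some `T > 0`.  Then
`k_f·∫₀^T (q'(t))² dt = −m·U(2π)`; in particular `m·U(2π) < 0`. -/
theorem rotational_energy_balance
    (I kf : ℝ) (hI : 0 < I) (hkf : 0 < kf)
    (τ : ℝ → ℝ) (hτ : Continuous τ) (hper : Function.Periodic τ (2 * Real.pi))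
    (m : ℤ) (hm : m ≠ 0)
    (T : ℝ) (hT : 0 < T)
    (q q' q'' : ℝ → ℝ)
    (hq : ∀ t, HasDerivAt q (q' t) t)
    (hq' : ∀ t, HasDerivAt q' (q'' t) t)
    (hode : ∀ t, I * q'' t = -kf * q' t + τ (q t))
    (hwind : ∀ t, q (t + T) = q t + 2 * Real.pi * (m : ℝ)) :
    kf * ∫ t in (0:ℝ)..T, (q' t) ^ 2 = -(m : ℝ) * potentialU τ (2 * Real.pi) ∧
      (m : ℝ) * potentialU τ (2 * Real.pi) < 0 := by
  have hqc : Continuous q := continuous_iff_continuousAt.2 fun t => (hq t).continuousAt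
  have hq'c : Continuous q' := continuous_iff_continuousAt.2 fun t => (hq' t).continuousAt
  have hτint : ∀ t₁ t₂, IntervalIntegrable τ MeasureTheory.volume t₁ t₂ :=
    fun t₁ t₂ => hτ.intervalIntegrable t₁ t₂
  -- energy function
  set F : ℝ → ℝ := fun t => I / 2 * (q' t) ^ 2 - ∫ s in (0:ℝ)..(q t), τ s with hF
  have hFderiv : ∀ t, HasDerivAt F (-kf * (q' t) ^ 2) t := by
    intro t
    have h1 : HasDerivAt (fun t => (q' t) ^ 2) (2 * q' t ^ 1 * q'' t) t := (hq' t).pow 2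
    have h2 : HasDerivAt (fun x => ∫ s in (0:ℝ)..x, τ s) (τ (q t)) (q t) :=
      (hτ.integral_hasStrictDerivAt 0 (q t)).hasDerivAt
    have h3 : HasDerivAt (fun t => ∫ s in (0:ℝ)..(q t), τ s) (τ (q t) * q' t) t :=
      h2.comp t (hq t)
    have h4 := ((h1.const_mul (I / 2)).sub h3)
    refine h4.congr_deriv (Eq.symm ?_)
    have h5 := hode t
    linear_combination (-(q' t)) * h5
  -- integrability of q'^2
  have hint2 : IntervalIntegrable (fun t => (q' t) ^ 2) MeasureTheory.volume 0 T :=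
    ((hq'c.pow 2)).intervalIntegrable 0 T
  have hintF : IntervalIntegrable (fun t => -kf * (q' t) ^ 2) MeasureTheory.volume 0 T :=
    hint2.const_mul (-kf)
  have hFTC : (∫ t in (0:ℝ)..T, -kf * (q' t) ^ 2) = F T - F 0 :=
    intervalIntegral.integral_eq_sub_of_hasDerivAt (fun t _ => hFderiv t) hintF
  -- q' is T-periodic at 0 : q' T = q' 0
  have hq'per : q' T = q' 0 := by
    have e1 : HasDerivAt (fun t : ℝ => q (t + T)) (q' (0 + T)) 0 := by
      exact (hq (0 + T)).comp_add_const 0 T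
    have e2 : HasDerivAt (fun t : ℝ => q t + 2 * Real.pi * (m : ℝ)) (q' 0) 0 :=
      (hq 0).add_const _
    have e3 : (fun t : ℝ => q (t + T)) = fun t : ℝ => q t + 2 * Real.pi * (m : ℝ) :=
      funext hwind
    rw [e3] at e1
    have := e1.unique e2
    simpa using this
  -- q T = q 0 + 2πm
  have hqT : q T = q 0 + 2 * Real.pi * (m : ℝ) := by simpa using hwind 0
  -- periodic integral identity
  have hzs : (∫ s in (q 0)..(q 0 + (m : ℤ) • (2 * Real.pi)), τ s)
      = (m : ℤ) • ∫ s in (q 0)..(q 0 + 2 * Real.pi), τ s :=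
    hper.intervalIntegral_add_zsmul_eq m (q 0) hτint
  have hshift : (∫ s in (q 0)..(q 0 + 2 * Real.pi), τ s) = ∫ s in (0:ℝ)..(2 * Real.pi), τ s := by
    simpa using hper.intervalIntegral_add_eq (q 0) 0
  have hadj : (∫ s in (0:ℝ)..(q 0), τ s) + (∫ s in (q 0)..(q T), τ s)
      = ∫ s in (0:ℝ)..(q T), τ s :=
    intervalIntegral.integral_add_adjacent_intervals (hτint _ _) (hτint _ _)
  have hkey : (∫ s in (0:ℝ)..(q T), τ s) - (∫ s in (0:ℝ)..(q 0), τ s)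
      = (m : ℝ) * ∫ s in (0:ℝ)..(2 * Real.pi), τ s := by
    rw [← hadj]
    have : (∫ s in (q 0)..(q T), τ s) = (m : ℝ) * ∫ s in (0:ℝ)..(2 * Real.pi), τ s := by
      have hqT' : q T = q 0 + (m : ℤ) • (2 * Real.pi) := by
        rw [hqT, zsmul_eq_mul]; ring
      rw [hqT', hzs, hshift, zsmul_eq_mul]
    linarith
  -- main equality
  have hmain : kf * ∫ t in (0:ℝ)..T, (q' t) ^ 2
      = -(m : ℝ) * potentialU τ (2 * Real.pi) := by
    have hFdiff : F T - F 0 = -((m : ℝ) * ∫ s in (0:ℝ)..(2 * Real.pi), τ s) := by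
      simp only [hF, hq'per]
      linarith [hkey]
    have hlhs : (∫ t in (0:ℝ)..T, -kf * (q' t) ^ 2)
        = -kf * ∫ t in (0:ℝ)..T, (q' t) ^ 2 := by
      rw [intervalIntegral.integral_const_mul]
    rw [potentialU]
    have := hFTC
    rw [hlhs, hFdiff] at this
    nlinarith [this]
  refine ⟨hmain, ?_⟩
  -- strict positivity of the integral
  have hTle : (0:ℝ) ≤ T := hT.le
  have hpos : 0 < ∫ t in (0:ℝ)..T, (q' t) ^ 2 := by
    have hnonneg : 0 ≤ ∫ t in (0:ℝ)..T, (q' t) ^ 2 :=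
      intervalIntegral.integral_nonneg hTle fun t _ => sq_nonneg _
    rcases hnonneg.lt_or_eq with h | h
    · exact h
    · exfalso
      -- integral = 0 forces q' = 0 a.e. on Ioc 0 T
      have hset : (∫ t in Set.Ioc (0:ℝ) T, (q' t) ^ 2) = 0 := by
        rw [← intervalIntegral.integral_of_le hTle]; exact h.symm
      have hInt : MeasureTheory.IntegrableOn (fun t => (q' t) ^ 2) (Set.Ioc (0:ℝ) T) :=
        (hq'c.pow 2).integrableOn_Ioc
      have hae : (fun t => (q' t) ^ 2)
          =ᵐ[MeasureTheory.volume.restrict (Set.Ioc (0:ℝ) T)] 0 := by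
        rw [← MeasureTheory.integral_eq_zero_iff_of_nonneg
          (fun t => sq_nonneg (q' t)) hInt]
        exact hset
      have hae' : q' =ᵐ[MeasureTheory.volume.restrict (Set.Ioc (0:ℝ) T)] 0 := by
        filter_upwards [hae] with t ht
        have : (q' t) ^ 2 = 0 := ht
        exact pow_eq_zero_iff two_ne_zero |>.mp this
      have hintq' : (∫ t in (0:ℝ)..T, q' t) = 0 := by
        rw [intervalIntegral.integral_of_le hTle]
        calc (∫ t in Set.Ioc (0:ℝ) T, q' t)
            = ∫ t in Set.Ioc (0:ℝ) T, (0:ℝ) := MeasureTheory.integral_congr_ae hae'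
          _ = 0 := by simp
      have hftc : (∫ t in (0:ℝ)..T, q' t) = q T - q 0 :=
        intervalIntegral.integral_eq_sub_of_hasDerivAt (fun t _ => hq t)
          (hq'c.intervalIntegrable 0 T)
      have hcontra : q T - q 0 = 0 := by rw [← hftc, hintq']
      rw [hqT] at hcontra
      have : 2 * Real.pi * (m : ℝ) = 0 := by linarith
      have hm' : (m : ℝ) ≠ 0 := Int.cast_ne_zero.2 hm
      have := Real.pi_pos
      rcases lt_or_gt_of_ne hm' with h' | h' <;> nlinarith
  have : (m : ℝ) * potentialU τ (2 * Real.pi) = -(kf * ∫ t in (0:ℝ)..T, (q' t) ^ 2) := by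
    linarith [hmain]
  rw [this]
  have := mul_pos hkf hpos
  linarith
end

section
/- (Theorem 1, sign definiteness, time form.) Assume k_f > 0 and that τ : ℝ → ℝ is Lipschitz continuous and 2π-periodic. Suppose q : ℝ → ℝ is twice differentiable, satisfies I·q''(t) = −k_f·q'(t) + τ(q(t)) for all t, satisfies q(t + T) = q(t) + 2π for all t for some T > 0, and the map t ↦ (q(t) mod 2π, q'(t)) is injective on [0, T). Then q'(t) > 0 for all t ∈ ℝ; that is, a non-contractible limit cycle never crosses or touches the axis q' = 0. -/
open Set Real Filter Topology NNReal

/-- **Theorem 1, sign definiteness, time form.** -/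
theorem noncontractible_cycle_positive_velocity
    (I kf : ℝ) (hI : 0 < I) (hkf : 0 < kf)
    (τ : ℝ → ℝ) (hlip : ∃ K, LipschitzWith K τ)
    (hper : Function.Periodic τ (2 * Real.pi))
    (T : ℝ) (hT : 0 < T)
    (q q' q'' : ℝ → ℝ)
    (hq : ∀ t, HasDerivAt q (q' t) t)
    (hq' : ∀ t, HasDerivAt q' (q'' t) t)
    (hode : ∀ t, I * q'' t = -kf * q' t + τ (q t))
    (hwind : ∀ t, q (t + T) = q t + 2 * Real.pi)
    (hinj : Set.InjOn (fun t => (((q t : ℝ) : Real.Angle), q' t)) (Set.Ico 0 T)) :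
    ∀ t : ℝ, 0 < q' t := by
  obtain ⟨K, hK⟩ := hlip
  have pi_pos := Real.pi_pos
  have hqd : Differentiable ℝ q := fun t => (hq t).differentiableAt
  have hq'd : Differentiable ℝ q' := fun t => (hq' t).differentiableAt
  have hqc : Continuous q := hqd.continuous
  have hq'c : Continuous q' := hq'd.continuous
  -- q' is T-periodic
  have hq'per : ∀ t, q' (t + T) = q' t := by
    intro t
    have h1 : HasDerivAt (fun u => q (u + T)) (q' (t + T) * 1) t :=
      (hq (t + T)).comp t ((hasDerivAt_id t).add_const T)
    have h2 : HasDerivAt (fun u => q (u + T)) (q' t) t := by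
      have he : (fun u => q (u + T)) = fun u => q u + 2 * π := funext hwind
      rw [he]; exact (hq t).add_const _
    have := h1.unique h2
    linarith [this]
  have hq'Per : Function.Periodic q' T := hq'per
  -- integer winding
  have hwindZ : ∀ (n : ℤ) (t : ℝ), q (t + n * T) = q t + n * (2 * π) := by
    intro n t
    have hGper : Function.Periodic (fun u => q u - (2 * π / T) * u) T := by
      intro u
      simp only
      rw [hwind u]
      field_simp
      ring
    have h := hGper.sub_int_mul_eq (x := t + n * T) n
    simp only [add_sub_cancel_right] at h
    have hTne : T ≠ 0 := ne_of_gt hT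
    field_simp at h
    rw [show t + T * (n:ℝ) = t + n * T by ring] at h
    apply mul_left_cancel₀ hTne
    linear_combination -h
  -- key injectivity consequence
  have hkey : ∀ s δ : ℝ, 0 < δ → δ < T → q (s + δ) = q s → q' (s + δ) = q' s → False := by
    intro s δ hδ0 hδT hqe hq'e
    set n₁ : ℤ := ⌊s / T⌋ with hn₁
    set n₂ : ℤ := ⌊(s + δ) / T⌋ with hn₂
    set t₁ : ℝ := s - n₁ * T with ht₁d
    set t₂ : ℝ := s + δ - n₂ * T with ht₂d
    have ht₁ : t₁ ∈ Ico (0:ℝ) T :=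
      ⟨Int.sub_floor_div_mul_nonneg s hT, Int.sub_floor_div_mul_lt s hT⟩
    have ht₂ : t₂ ∈ Ico (0:ℝ) T :=
      ⟨Int.sub_floor_div_mul_nonneg (s + δ) hT, Int.sub_floor_div_mul_lt (s + δ) hT⟩
    have hq1 : q t₁ = q s - n₁ * (2 * π) := by
      have h := hwindZ n₁ t₁
      rw [show t₁ + n₁ * T = s by rw [ht₁d]; ring] at h
      linarith
    have hq2 : q t₂ = q s - n₂ * (2 * π) := by
      have h := hwindZ n₂ t₂
      rw [show t₂ + n₂ * T = s + δ by rw [ht₂d]; ring] at h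
      rw [hqe] at h
      linarith
    have hq'1 : q' t₁ = q' s := by
      have h := hq'Per.sub_int_mul_eq (x := s) n₁
      exact h
    have hq'2 : q' t₂ = q' s := by
      have h := hq'Per.sub_int_mul_eq (x := s + δ) n₂
      rw [ht₂d]
      rw [h, hq'e]
    have himg : (fun t => (((q t : ℝ) : Real.Angle), q' t)) t₁
        = (fun t => (((q t : ℝ) : Real.Angle), q' t)) t₂ := by
      simp only
      refine Prod.ext ?_ ?_
      · rw [Real.Angle.angle_eq_iff_two_pi_dvd_sub]
        refine ⟨n₂ - n₁, ?_⟩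
        rw [hq1, hq2]
        push_cast
        ring
      · simp only [hq'1, hq'2]
    have heq := hinj ht₁ ht₂ himg
    have hδeq : δ = ((n₂ - n₁ : ℤ) : ℝ) * T := by
      rw [ht₁d, ht₂d] at heq
      push_cast
      linarith
    rcases le_or_gt (n₂ - n₁) 0 with h | h
    · have h' : ((n₂ - n₁ : ℤ) : ℝ) ≤ 0 := by exact_mod_cast h
      nlinarith
    · have h' : (1 : ℝ) ≤ ((n₂ - n₁ : ℤ) : ℝ) := by exact_mod_cast h
      nlinarith
  -- reduction helper
  have hred : ∀ (n : ℤ) (x δ : ℝ), q (x - n * T + δ) - q (x - n * T) = q (x + δ) - q x := by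
    intro n x δ
    have h1 : q (x - n * T + δ) = q (x + δ) + (-n : ℤ) * (2 * π) := by
      have := hwindZ (-n) (x + δ)
      rw [show x + δ + (-n : ℤ) * T = x - n * T + δ by push_cast; ring] at this
      exact this
    have h2 : q (x - n * T) = q x + (-n : ℤ) * (2 * π) := by
      have := hwindZ (-n) x
      rw [show x + (-n : ℤ) * T = x - n * T by push_cast; ring] at this
      exact this
    rw [h1, h2]; ring
  -- monotonicity: q increases strictly over any span in (0, T)
  have hmono : ∀ (t δ : ℝ), 0 < δ → δ < T → q t < q (t + δ) := by
    by_contra hcon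
    push_neg at hcon
    obtain ⟨t₀, δ₀, hδ₀0, hδ₀T, hle0⟩ := hcon
    set t₀' : ℝ := t₀ - ⌊t₀ / T⌋ * T with ht₀'d
    have ht₀' : t₀' ∈ Icc (0:ℝ) T :=
      ⟨Int.sub_floor_div_mul_nonneg t₀ hT, le_of_lt (Int.sub_floor_div_mul_lt t₀ hT)⟩
    have ht₀'le : q (t₀' + δ₀) ≤ q t₀' := by
      have := hred ⌊t₀ / T⌋ t₀ δ₀
      rw [← ht₀'d] at this
      linarith
    set S : Set (ℝ × ℝ) := (Icc δ₀ T ×ˢ Icc 0 T) ∩ {p : ℝ × ℝ | q (p.2 + p.1) ≤ q p.2}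
      with hSdef
    have hScompact : IsCompact S :=
      (isCompact_Icc.prod isCompact_Icc).inter_right
        (isClosed_le (hqc.comp (continuous_snd.add continuous_fst)) (hqc.comp continuous_snd))
    set D : Set ℝ := Prod.fst '' S with hDdef
    have hDne : D.Nonempty :=
      ⟨δ₀, ⟨(δ₀, t₀'), ⟨⟨⟨le_refl _, le_of_lt hδ₀T⟩, ht₀'⟩, ht₀'le⟩, rfl⟩⟩
    have hDcompact : IsCompact D := hScompact.image continuous_fst
    set δ' : ℝ := sSup D with hδ'd
    have hδ'mem : δ' ∈ D := hDcompact.sSup_mem hDne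
    obtain ⟨p, ⟨⟨hp1mem, hp2mem⟩, hple⟩, hp1⟩ := hδ'mem
    have hδ'lo : δ₀ ≤ δ' := hp1 ▸ hp1mem.1
    have hδ'hi : δ' ≤ T := hp1 ▸ hp1mem.2
    have hpleδ' : q (p.2 + δ') ≤ q p.2 := by rw [← hp1]; exact hple
    have hδ'T : δ' < T := by
      rcases lt_or_eq_of_le hδ'hi with h | h
      · exact h
      · exfalso
        rw [h] at hpleδ'
        rw [hwind p.2] at hpleδ'
        linarith
    -- nonnegativity of q(u + δ') - q u for all u
    have hH0 : ∀ u, 0 ≤ q (u + δ') - q u := by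
      by_contra hcon2
      push_neg at hcon2
      obtain ⟨u₀, hu₀⟩ := hcon2
      set u₁ : ℝ := u₀ - ⌊u₀ / T⌋ * T with hu₁d
      have hu₁mem : u₁ ∈ Icc (0:ℝ) T :=
        ⟨Int.sub_floor_div_mul_nonneg u₀ hT, le_of_lt (Int.sub_floor_div_mul_lt u₀ hT)⟩
      have hu₁H : q (u₁ + δ') - q u₁ < 0 := by
        have := hred ⌊u₀ / T⌋ u₀ δ'
        rw [← hu₁d] at this
        linarith
      have hcont : ContinuousAt (fun δ => q (u₁ + δ) - q u₁) δ' :=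
        ((hqc.comp (continuous_const.add continuous_id)).sub continuous_const).continuousAt
      have hpre : {δ : ℝ | q (u₁ + δ) - q u₁ < 0} ∈ 𝓝 δ' := by
        have := hcont (Iio_mem_nhds hu₁H)
        simpa [Set.preimage, Set.mem_Iio] using this
      have hpre' : {δ : ℝ | q (u₁ + δ) - q u₁ < 0} ∈ 𝓝[>] δ' :=
        nhdsWithin_le_nhds hpre
      have hIoo : Ioo δ' T ∈ 𝓝[>] δ' := Ioo_mem_nhdsGT_of_mem ⟨le_refl δ', hδ'T⟩
      obtain ⟨δ₂, hδ₂1, hδ₂2⟩ := Filter.nonempty_of_mem (Filter.inter_mem hpre' hIoo)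
      have hδ₂D : δ₂ ∈ D := by
        refine ⟨(δ₂, u₁), ⟨⟨⟨?_, le_of_lt hδ₂2.2⟩, hu₁mem⟩, ?_⟩, rfl⟩
        · linarith [hδ₂2.1]
        · exact le_of_lt (by simpa using hδ₂1)
      have : δ₂ ≤ δ' := le_csSup hDcompact.bddAbove hδ₂D
      linarith [hδ₂2.1]
    have hHw : q (p.2 + δ') - q p.2 = 0 := le_antisymm (by linarith) (hH0 p.2)
    have hmin : IsLocalMin (fun u => q (u + δ') - q u) p.2 := by
      apply Filter.Eventually.of_forall
      intro u
      simp only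
      linarith [hH0 u]
    have hder : HasDerivAt (fun u => q (u + δ') - q u) (q' (p.2 + δ') - q' p.2) p.2 := by
      have h1 : HasDerivAt (fun u => q (u + δ')) (q' (p.2 + δ') * 1) p.2 :=
        (hq (p.2 + δ')).comp p.2 ((hasDerivAt_id p.2).add_const δ')
      rw [mul_one] at h1
      exact h1.sub (hq p.2)
    have h0 := hmin.hasDerivAt_eq_zero hder
    exact hkey p.2 δ' (lt_of_lt_of_le hδ₀0 hδ'lo) hδ'T (by linarith) (by linarith)
  -- q' is nonnegative
  have hq'nn : ∀ t, 0 ≤ q' t := by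
    intro t
    by_contra h
    push_neg at h
    have hslope : Tendsto (slope q t) (𝓝[≠] t) (𝓝 (q' t)) :=
      hasDerivAt_iff_tendsto_slope.mp (hq t)
    have hev : {u : ℝ | slope q t u < 0} ∈ 𝓝[≠] t := by
      have := hslope (Iio_mem_nhds h)
      simpa [Set.preimage, Set.mem_Iio] using this
    have hev' : {u : ℝ | slope q t u < 0} ∈ 𝓝[>] t :=
      nhdsWithin_mono t (fun u (hu : u ∈ Ioi t) => ne_of_gt hu) hev
    have hIoo : Ioo t (t + T) ∈ 𝓝[>] t := Ioo_mem_nhdsGT_of_mem ⟨le_refl t, by linarith⟩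
    obtain ⟨u, hu1, hu2⟩ := Filter.nonempty_of_mem (Filter.inter_mem hev' hIoo)
    have hut : (0:ℝ) < u - t := by linarith [hu2.1]
    have hqu : q u < q t := by
      have hu1' : (q u - q t) / (u - t) < 0 := by
        have h' := hu1
        simp only [Set.mem_setOf_eq, slope_def_field] at h'
        exact h'
      have := (div_lt_iff₀ hut).mp hu1'
      linarith
    have hm := hmono t (u - t) hut (by linarith [hu2.2])
    rw [add_sub_cancel] at hm
    linarith
  -- final: no zero of q'
  intro t
  rcases lt_or_eq_of_le (hq'nn t) with h | h
  · exact h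
  exfalso
  have hq't : q' t = 0 := h.symm
  have hmin : IsLocalMin q' t := by
    apply Filter.Eventually.of_forall
    intro u
    rw [hq't]
    exact hq'nn u
  have h2 : q'' t = 0 := hmin.hasDerivAt_eq_zero (hq' t)
  have hτ : τ (q t) = 0 := by
    have := hode t
    rw [h2, hq't] at this
    linarith
  -- ODE uniqueness against the constant solution
  set v : ℝ → ℝ × ℝ → ℝ × ℝ := fun _ p => (p.2, (-kf * p.2 + τ p.1) / I) with hv
  have hCnn : (0:ℝ) ≤ max 1 ((kf + K) / I) := le_trans zero_le_one (le_max_left _ _)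
  set C : ℝ≥0 := ⟨max 1 ((kf + K) / I), hCnn⟩ with hC
  have hvlip : ∀ s : ℝ, LipschitzWith C (v s) := by
    intro s
    apply LipschitzWith.of_dist_le_mul
    intro p r
    have hCcoe : (C : ℝ) = max 1 ((kf + K) / I) := rfl
    rw [Prod.dist_eq, Prod.dist_eq]
    simp only [hv, Real.dist_eq]
    set M : ℝ := |p.1 - r.1| ⊔ |p.2 - r.2| with hM
    have hMnn : 0 ≤ M := le_trans (abs_nonneg _) le_sup_left
    have hτb : |τ p.1 - τ r.1| ≤ K * |p.1 - r.1| := by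
      have := hK.dist_le_mul p.1 r.1
      rwa [Real.dist_eq, Real.dist_eq] at this
    rw [hCcoe]
    apply sup_le
    · calc |p.2 - r.2| ≤ M := le_sup_right
        _ = 1 * M := (one_mul M).symm
        _ ≤ max 1 ((kf + K) / I) * M :=
          mul_le_mul_of_nonneg_right (le_max_left _ _) hMnn
    · have hnum : |(-kf * p.2 + τ p.1) - (-kf * r.2 + τ r.1)| ≤ (kf + K) * M := by
        have e : (-kf * p.2 + τ p.1) - (-kf * r.2 + τ r.1)
            = (-kf) * (p.2 - r.2) + (τ p.1 - τ r.1) := by ring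
        rw [e]
        calc |(-kf) * (p.2 - r.2) + (τ p.1 - τ r.1)|
            ≤ |(-kf) * (p.2 - r.2)| + |τ p.1 - τ r.1| := abs_add_le _ _
          _ = kf * |p.2 - r.2| + |τ p.1 - τ r.1| := by
              rw [abs_mul, abs_neg, abs_of_pos hkf]
          _ ≤ kf * M + K * M := by
              apply add_le_add
              · exact mul_le_mul_of_nonneg_left le_sup_right hkf.le
              · exact le_trans hτb (mul_le_mul_of_nonneg_left le_sup_left K.2)
          _ = (kf + K) * M := by ring
      have hdiv : |(-kf * p.2 + τ p.1) / I - (-kf * r.2 + τ r.1) / I|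
          ≤ ((kf + K) / I) * M := by
        rw [div_sub_div_same, abs_div, abs_of_pos hI, div_mul_eq_mul_div]
        gcongr
      calc |(-kf * p.2 + τ p.1) / I - (-kf * r.2 + τ r.1) / I|
          ≤ ((kf + K) / I) * M := hdiv
        _ ≤ max 1 ((kf + K) / I) * M :=
          mul_le_mul_of_nonneg_right (le_max_right _ _) hMnn
  set f : ℝ → ℝ × ℝ := fun u => (q u, q' u) with hf
  set g : ℝ → ℝ × ℝ := fun _ => (q t, 0) with hg
  have hf' : ∀ u : ℝ, HasDerivAt f (v u (f u)) u := by
    intro u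
    have h1 : HasDerivAt f (q' u, q'' u) u := (hq u).prodMk (hq' u)
    have h2 : v u (f u) = (q' u, q'' u) := by
      simp only [hv, hf]
      refine Prod.ext rfl ?_
      show (-kf * q' u + τ (q u)) / I = q'' u
      field_simp
      linarith [hode u]
    rwa [h2]
  have hg' : ∀ u : ℝ, HasDerivAt g (v u (g u)) u := by
    intro u
    have h1 : HasDerivAt g ((0:ℝ), (0:ℝ)) u := hasDerivAt_const _ _
    have h2 : v u (g u) = ((0:ℝ), (0:ℝ)) := by
      simp only [hv, hg]
      refine Prod.ext rfl ?_
      show (-kf * 0 + τ (q t)) / I = 0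
      rw [hτ]
      ring
    rwa [h2]
  have hfc : ContinuousOn f (Icc t (t + T)) := (hqc.prodMk hq'c).continuousOn
  have hgc : ContinuousOn g (Icc t (t + T)) := continuousOn_const
  have huniq : Set.EqOn f g (Icc t (t + T)) := by
    apply ODE_solution_unique hvlip hfc
      (fun u _ => (hf' u).hasDerivWithinAt) hgc (fun u _ => (hg' u).hasDerivWithinAt)
    simp only [hf, hg]
    rw [hq't]
  have hend : f (t + T) = g (t + T) := huniq ⟨by linarith, le_refl _⟩
  have h3 : q (t + T) = q t := congrArg Prod.fst hend
  have h4 := hwind t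
  linarith
end

section
/- (Thermodynamic work equals mechanical work.) Under the concrete engine definitions, if V₁(q)/T_h + V₂(q)/T_c ≠ 0 for all q, then for all q ∈ ℝ the total torque satisfies τ(q) = (p(q) − p_a) · d/dq (V₁(q) + V₂(q)); consequently, along any differentiable angle trajectory q(t), the mechanical power τ(q(t))·q'(t) equals (p(q(t)) − p_a) times the time derivative of the total gas volume V₁(q(t)) + V₂(q(t)). -/
/-- Piston position: `x(q) = −r·cos q + √(l² − r²·sin² q)`. -/
noncomputable def pistonX (r l q : ℝ) : ℝ :=
  -r * Real.cos q + Real.sqrt (l ^ 2 - r ^ 2 * Real.sin q ^ 2)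

/-- Torque-arm function: `φ(q) = r·sin q − r²·sin q·cos q / √(l² − r²·sin² q)`. -/
noncomputable def torqueArm (r l q : ℝ) : ℝ :=
  r * Real.sin q - r ^ 2 * Real.sin q * Real.cos q /
    Real.sqrt (l ^ 2 - r ^ 2 * Real.sin q ^ 2)

/-- Volume of the hot cylinder: `V₁(q) = V₁ᵐᵃˣ − A₁·(x(q − α) − (l − r))`. -/
noncomputable def vol1 (r l A₁ V₁max α q : ℝ) : ℝ :=
  V₁max - A₁ * (pistonX r l (q - α) - (l - r))

/-- Volume of the cold cylinder: `V₂(q) = V₂ᵐᵃˣ − A₂·(x(q) − (l − r))`. -/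
noncomputable def vol2 (r l A₂ V₂max q : ℝ) : ℝ :=
  V₂max - A₂ * (pistonX r l q - (l - r))

/-- Pressure: `p(q) = N·R / (V₁(q)/T_h + V₂(q)/T_c)`. -/
noncomputable def pressure (r l A₁ A₂ V₁max V₂max α Th Tc N R q : ℝ) : ℝ :=
  N * R / (vol1 r l A₁ V₁max α q / Th + vol2 r l A₂ V₂max q / Tc)

/-- Total torque: `τ(q) = −(A₁·φ(q − α) + A₂·φ(q))·(p(q) − p_a)`. -/
noncomputable def torque (r l A₁ A₂ V₁max V₂max α Th Tc N R pa q : ℝ) : ℝ :=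
  -(A₁ * torqueArm r l (q - α) + A₂ * torqueArm r l q) *
    (pressure r l A₁ A₂ V₁max V₂max α Th Tc N R q - pa)

lemma hasDerivAt_pistonX (r l : ℝ) (hr : 0 < r) (hrl : r < l) (q : ℝ) :
    HasDerivAt (pistonX r l) (torqueArm r l q) q := by
  have hu0 : 0 < l ^ 2 - r ^ 2 * Real.sin q ^ 2 := by
    nlinarith [Real.sin_sq_le_one q, sq_nonneg (Real.sin q)]
  have hs : Real.sqrt (l ^ 2 - r ^ 2 * Real.sin q ^ 2) ≠ 0 :=
    ne_of_gt (Real.sqrt_pos.mpr hu0)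
  have hu : HasDerivAt (fun q : ℝ => l ^ 2 - r ^ 2 * Real.sin q ^ 2)
      (-(r ^ 2 * (2 * Real.sin q ^ 1 * Real.cos q))) q := by
    have h1 := ((Real.hasDerivAt_sin q).pow 2).const_mul (r ^ 2)
    simpa using (hasDerivAt_const q (l ^ 2)).fun_sub h1
  have hsqrt : HasDerivAt (fun q : ℝ => Real.sqrt (l ^ 2 - r ^ 2 * Real.sin q ^ 2))
      ((1 / (2 * Real.sqrt (l ^ 2 - r ^ 2 * Real.sin q ^ 2))) *
        (-(r ^ 2 * (2 * Real.sin q ^ 1 * Real.cos q)))) q :=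
    (Real.hasDerivAt_sqrt (ne_of_gt hu0)).comp q hu
  have hcos : HasDerivAt (fun q : ℝ => -r * Real.cos q) (-r * -Real.sin q) q :=
    (Real.hasDerivAt_cos q).const_mul (-r)
  have : HasDerivAt (pistonX r l) _ q := hcos.fun_add hsqrt
  convert this using 1
  unfold torqueArm
  field_simp
  ring

lemma hasDerivAt_volsum (r l A₁ A₂ V₁max V₂max α : ℝ) (hr : 0 < r) (hrl : r < l) (q : ℝ) :
    HasDerivAt (fun q' : ℝ => vol1 r l A₁ V₁max α q' + vol2 r l A₂ V₂max q')
      (-(A₁ * torqueArm r l (q - α) + A₂ * torqueArm r l q)) q := by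
  have h1 : HasDerivAt (fun q' : ℝ => pistonX r l (q' - α)) (torqueArm r l (q - α)) q := by
    have := (hasDerivAt_pistonX r l hr hrl (q - α)).comp q
      ((hasDerivAt_id q).sub_const α)
    simpa [Function.comp_def] using this
  have h2 := hasDerivAt_pistonX r l hr hrl q
  have hv1 : HasDerivAt (fun q' : ℝ => vol1 r l A₁ V₁max α q')
      (-(A₁ * torqueArm r l (q - α))) q := by
    unfold vol1
    simpa using (hasDerivAt_const q V₁max).fun_sub (((h1.sub_const (l - r)).const_mul A₁))
  have hv2 : HasDerivAt (fun q' : ℝ => vol2 r l A₂ V₂max q')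
      (-(A₂ * torqueArm r l q)) q := by
    unfold vol2
    simpa using (hasDerivAt_const q V₂max).fun_sub (((h2.sub_const (l - r)).const_mul A₂))
  rw [show -(A₁ * torqueArm r l (q - α) + A₂ * torqueArm r l q) =
    -(A₁ * torqueArm r l (q - α)) + -(A₂ * torqueArm r l q) by ring]
  exact hv1.fun_add hv2

/-- **thermodynamic work equals mechanical work.**
If `V₁(q)/T_h + V₂(q)/T_c ≠ 0` for all `q`, then the total torque satisfies
`τ(q) = (p(q) − p_a) · d/dq (V₁(q) + V₂(q))` for all `q`; consequently, along any
differentiable angle trajectory `t ↦ q(t)`, the mechanical power `τ(q(t))·q'(t)`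
equals `(p(q(t)) − p_a)` times the time derivative of the total gas volume
`V₁(q(t)) + V₂(q(t))`. -/
theorem thermo_work_eq_mech_work
    (r l A₁ A₂ V₁max V₂max α Th Tc N R pa : ℝ)
    (hr : 0 < r) (hrl : r < l) (hA₁ : 0 < A₁) (hA₂ : 0 < A₂)
    (hTh : 0 < Th) (hTc : 0 < Tc) (hN : 0 < N) (hR : 0 < R)
    (hdenom : ∀ q : ℝ, vol1 r l A₁ V₁max α q / Th + vol2 r l A₂ V₂max q / Tc ≠ 0) :
    (∀ q : ℝ,
        torque r l A₁ A₂ V₁max V₂max α Th Tc N R pa q =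
          (pressure r l A₁ A₂ V₁max V₂max α Th Tc N R q - pa) *
            deriv (fun q' : ℝ => vol1 r l A₁ V₁max α q' + vol2 r l A₂ V₂max q') q) ∧
      ∀ (qt qt' : ℝ → ℝ), (∀ t, HasDerivAt qt (qt' t) t) →
        ∀ t : ℝ,
          torque r l A₁ A₂ V₁max V₂max α Th Tc N R pa (qt t) * qt' t =
            (pressure r l A₁ A₂ V₁max V₂max α Th Tc N R (qt t) - pa) *
              deriv (fun s : ℝ => vol1 r l A₁ V₁max α (qt s) + vol2 r l A₂ V₂max (qt s)) t := by
  constructor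
  · intro q
    rw [(hasDerivAt_volsum r l A₁ A₂ V₁max V₂max α hr hrl q).deriv]
    unfold torque
    ring
  · intro qt qt' hqt t
    have hc : HasDerivAt (fun s : ℝ => vol1 r l A₁ V₁max α (qt s) + vol2 r l A₂ V₂max (qt s))
        (-(A₁ * torqueArm r l (qt t - α) + A₂ * torqueArm r l (qt t)) * qt' t) t := by
      simpa [Function.comp_def] using
        ((hasDerivAt_volsum r l A₁ A₂ V₁max V₂max α hr hrl (qt t)).comp t (hqt t))
    rw [hc.deriv]
    unfold torque
    ring
end

section
/- (Symmetry of the torque under the reflection (q, α) ↦ (2π − q, 2π − α).) Under the concrete engine definitions, write τ_α for the torque with phase shift α. If V₁(q)/T_h + V₂(q)/T_c ≠ 0 for all q and all phase shifts, then for all q, α ∈ ℝ: τ_{2π−α}(2π − q) = −τ_α(q). In particular, q* is a zero of τ_α if and only if 2π − q* is a zero of τ_{2π−α}, and the bifurcation diagram of equilibria is symmetric under (q, α) ↦ (2π − q, 2π − α). -/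
lemma cos_two_pi_sub (q : ℝ) : Real.cos (2 * Real.pi - q) = Real.cos q := by
  rw [Real.cos_sub]; simp

lemma sin_two_pi_sub (q : ℝ) : Real.sin (2 * Real.pi - q) = -Real.sin q := by
  rw [Real.sin_sub]; simp

lemma pistonX_reflect (r l q : ℝ) : pistonX r l (2 * Real.pi - q) = pistonX r l q := by
  simp [pistonX, cos_two_pi_sub, sin_two_pi_sub]

lemma torqueArm_reflect (r l q : ℝ) :
    torqueArm r l (2 * Real.pi - q) = -torqueArm r l q := by
  simp [torqueArm, cos_two_pi_sub, sin_two_pi_sub]; ring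

/-- **symmetry of the torque under `(q, α) ↦ (2π − q, 2π − α)`.**
If `V₁(q)/T_h + V₂(q)/T_c ≠ 0` for all `q` and all phase shifts `α`, then for all
`q, α`: `τ_{2π−α}(2π − q) = −τ_α(q)`.  In particular `q*` is a zero of `τ_α` iff
`2π − q*` is a zero of `τ_{2π−α}`, so the bifurcation diagram of equilibria is
symmetric under `(q, α) ↦ (2π − q, 2π − α)`. -/
theorem torque_reflection_symmetry
    (r l A₁ A₂ V₁max V₂max Th Tc N R pa : ℝ)
    (hr : 0 < r) (hrl : r < l) (hA₁ : 0 < A₁) (hA₂ : 0 < A₂)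
    (hTh : 0 < Th) (hTc : 0 < Tc) (hN : 0 < N) (hR : 0 < R)
    (hdenom : ∀ (α q : ℝ),
      vol1 r l A₁ V₁max α q / Th + vol2 r l A₂ V₂max q / Tc ≠ 0) :
    ∀ (q α : ℝ),
      torque r l A₁ A₂ V₁max V₂max (2 * Real.pi - α) Th Tc N R pa (2 * Real.pi - q) =
        -torque r l A₁ A₂ V₁max V₂max α Th Tc N R pa q ∧
      (torque r l A₁ A₂ V₁max V₂max α Th Tc N R pa q = 0 ↔
        torque r l A₁ A₂ V₁max V₂max (2 * Real.pi - α) Th Tc N R pa (2 * Real.pi - q) = 0) := by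
  intro q α
  have hxneg : ∀ x : ℝ, pistonX r l (-x) = pistonX r l x := by
    intro x; simp [pistonX]
  have harg : 2 * Real.pi - q - (2 * Real.pi - α) = -(q - α) := by ring
  have hargneg : ∀ x : ℝ, torqueArm r l (-x) = -torqueArm r l x := by
    intro x; simp [torqueArm]; ring
  have hv1 : vol1 r l A₁ V₁max (2 * Real.pi - α) (2 * Real.pi - q)
      = vol1 r l A₁ V₁max α q := by
    unfold vol1; rw [harg, hxneg]
  have hv2 : vol2 r l A₂ V₂max (2 * Real.pi - q) = vol2 r l A₂ V₂max q := by
    unfold vol2; rw [pistonX_reflect]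
  have hp : pressure r l A₁ A₂ V₁max V₂max (2 * Real.pi - α) Th Tc N R (2 * Real.pi - q)
      = pressure r l A₁ A₂ V₁max V₂max α Th Tc N R q := by
    unfold pressure; rw [hv1, hv2]
  have hmain : torque r l A₁ A₂ V₁max V₂max (2 * Real.pi - α) Th Tc N R pa (2 * Real.pi - q)
      = -torque r l A₁ A₂ V₁max V₂max α Th Tc N R pa q := by
    unfold torque
    rw [harg, hargneg, torqueArm_reflect, hp]
    ring
  refine ⟨hmain, ?_⟩
  rw [hmain]
  constructor
  · intro h; rw [h]; ring
  · intro h; linarith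
end
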